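/- Let ρ be a size function on a topological space E. For every compact subset K of E, ρ°(K) ≤ sup_{x ∈ K} ρ⁺({x}), where ρ⁺(A) = inf over open G ⊇ A of ρ(G). -/

import Mathlib

open scoped ENNReal

/-- A bornology on `E`, as a collection of "bounded" sets. -/
def IsBornology {E : Type*} (B : Set (Set E)) : Prop :=
  (∀ x : E, ∃ b ∈ B, x ∈ b) ∧
  (∀ b ∈ B, ∀ b' ∈ B, b ∪ b' ∈ B) ∧
  (∀ b b' : Set E, b ⊆ b' → b' ∈ B → b ∈ B)

/-- `ρ` is a size function. -/
def IsSizeFunction {E : Type*} (ρ : Set E → ℝ≥0∞) : Prop :=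
  ρ ∅ = 0 ∧ (∀ x : E, ρ {x} < ⊤) ∧ (∀ A A' : Set E, A ⊆ A' → ρ A ≤ ρ A')

/-- The monk of a size function. -/
noncomputable def monk {E : Type*} (ρ : Set E → ℝ≥0∞) (A : Set E) : ℝ≥0∞ :=
  sInf {t : ℝ≥0∞ | 0 < t ∧ ∃ S : Finset (Set E), (A ⊆ ⋃ s ∈ S, s) ∧ ∀ s ∈ S, ρ s ≤ t}

/-- The outer regularization `ρ⁺`. -/
noncomputable def sizePlus {E : Type*} [TopologicalSpace E] (ρ : Set E → ℝ≥0∞) (A : Set E) : ℝ≥0∞ :=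
  ⨅ (G : Set E) (_ : IsOpen G) (_ : A ⊆ G), ρ G

theorem stmt14 {E : Type*} [TopologicalSpace E] (ρ : Set E → ℝ≥0∞)
    (hρ : IsSizeFunction ρ) :
    ∀ K : Set E, IsCompact K → monk ρ K ≤ ⨆ x ∈ K, sizePlus ρ {x} := by
  intro K hK
  refine le_of_forall_gt_imp_ge_of_dense fun t ht => ?_
  have ht0 : 0 < t := lt_of_le_of_lt zero_le ht
  have h : ∀ x ∈ K, ∃ G : Set E, IsOpen G ∧ x ∈ G ∧ ρ G ≤ t := by
    intro x hx
    have hlt : sizePlus ρ {x} < t :=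
      lt_of_le_of_lt (le_iSup₂ (f := fun x _ => sizePlus ρ {x}) x hx) ht
    simp only [sizePlus, iInf_lt_iff] at hlt
    obtain ⟨G, hGo, hxG, hG⟩ := hlt
    exact ⟨G, hGo, Set.singleton_subset_iff.mp hxG, hG.le⟩
  classical
  choose! G hGo hxG hGt using h
  obtain ⟨s, hsK, hs⟩ := hK.elim_nhds_subcover G
    (fun x hx => (hGo x hx).mem_nhds (hxG x hx))
  refine sInf_le ⟨ht0, s.image G, ?_, ?_⟩
  · intro x hx
    obtain ⟨u, hu⟩ := Set.mem_iUnion.mp (hs hx)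
    simp only [Set.mem_iUnion, exists_prop] at hu ⊢
    exact ⟨G u, ⟨Finset.mem_image_of_mem G hu.1, hu.2⟩⟩
  · intro g hg
    obtain ⟨x, hx, rfl⟩ := Finset.mem_image.mp hg
    exact hGt x (hsK x hx)
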